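/- Let G be a DAG with maximum out-degree Δ^out. The minimum over all bijective time assignments t of the maximum temporal reachability of (G, t) equals Δ^out + 1. -/

import Mathlib

variable {V : Type*}

/-- Strict temporal reachability in a digraph with edge relation `E` and time
assignment `t`: `DTReach E t u v τ` means there is a strict temporal (directed)
path from `u` to `v` whose last edge is active at time `τ`. -/
inductive DTReach (E : V → V → Prop) (t : V → V → ℕ) (u : V) : V → ℕ → Prop
  | single {v : V} (h : E u v) : DTReach E t u v (t u v)
  | cons {v w : V} {τ : ℕ} (h : DTReach E t u v τ) (hadj : E v w)
      (hlt : τ < t v w) : DTReach E t u w (t v w)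

/-- The temporal reachability set of `u` in a directed temporal graph. -/
def dreachSet (E : V → V → Prop) (t : V → V → ℕ) (u : V) : Set V :=
  {v | v = u ∨ ∃ τ, DTReach E t u v τ}

section Aux
variable [Fintype V] [Nonempty V] [LinearOrder V] [DecidableEq V]

def myIdx (v : V) : ℕ := (Finset.univ.filter (· < v)).card

lemma myIdx_lt_card (v : V) : myIdx v < Fintype.card V := by
  have h : Finset.univ.filter (· < v) ⊂ Finset.univ := by
    refine ⟨Finset.filter_subset _ _, fun hsub => ?_⟩
    have := hsub (Finset.mem_univ v)
    simp at this
  simpa [myIdx, Finset.card_univ] using Finset.card_lt_card h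

lemma myIdx_strictMono : StrictMono (myIdx (V := V)) := by
  intro a b hab
  apply Finset.card_lt_card
  constructor
  · intro x hx
    simp only [Finset.mem_filter, Finset.mem_univ, true_and] at *
    exact hx.trans hab
  · intro hsub
    have := hsub (Finset.mem_filter.2 ⟨Finset.mem_univ a, hab⟩)
    simp at this

def myKey (p : V × V) : ℕ :=
  (Fintype.card V - 1 - myIdx p.1) * Fintype.card V + myIdx p.2

lemma myKey_lt_of_fst_lt {p q : V × V} (h : p.1 < q.1) : myKey q < myKey p := by
  have h1 := myIdx_strictMono h
  have h2 := myIdx_lt_card q.1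
  have h3 := myIdx_lt_card q.2
  have hA : (Fintype.card V - 1 - myIdx q.1) + 1 ≤ Fintype.card V - 1 - myIdx p.1 := by omega
  calc myKey q
      < (Fintype.card V - 1 - myIdx q.1) * Fintype.card V + Fintype.card V :=
        Nat.add_lt_add_left h3 _
    _ = ((Fintype.card V - 1 - myIdx q.1) + 1) * Fintype.card V := by ring
    _ ≤ (Fintype.card V - 1 - myIdx p.1) * Fintype.card V := Nat.mul_le_mul_right _ hA
    _ ≤ myKey p := Nat.le_add_right _ _

lemma myKey_injective : Function.Injective (myKey (V := V)) := by
  intro p q hpq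
  rcases lt_trichotomy p.1 q.1 with h | h | h
  · exact absurd hpq (myKey_lt_of_fst_lt h).ne'
  · have h2 : myIdx p.2 = myIdx q.2 := by
      unfold myKey at hpq
      rw [h] at hpq
      omega
    exact Prod.ext h (myIdx_strictMono.injective h2)
  · exact absurd hpq (myKey_lt_of_fst_lt h).ne

def myT (E : Finset (V × V)) (a b : V) : ℕ :=
  if (a, b) ∈ E then 1 + (E.filter fun q => myKey q < myKey (a, b)).card else 0

lemma myT_lt {E : Finset (V × V)} {a b c d : V} (hp : (a, b) ∈ E) (hq : (c, d) ∈ E)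
    (hk : myKey (a, b) < myKey (c, d)) : myT E a b < myT E c d := by
  simp only [myT, if_pos hp, if_pos hq]
  have hss : E.filter (fun q => myKey q < myKey (a, b))
      ⊂ E.filter (fun q => myKey q < myKey (c, d)) := by
    constructor
    · intro x hx
      simp only [Finset.mem_filter] at *
      exact ⟨hx.1, hx.2.trans hk⟩
    · intro hsub
      have := hsub (Finset.mem_filter.2 ⟨hp, hk⟩)
      simp only [Finset.mem_filter] at this
      exact absurd this.2 (lt_irrefl _)
  exact Nat.add_lt_add_left (Finset.card_lt_card hss) 1

lemma reach_char {E : Finset (V × V)} (htopo : ∀ p ∈ E, p.1 < p.2) {u v : V} {τ : ℕ}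
    (h : DTReach (fun a b => (a, b) ∈ E) (myT E) u v τ) : (u, v) ∈ E ∧ τ = myT E u v := by
  induction h with
  | single h => exact ⟨h, rfl⟩
  | @cons v w τ h hadj hlt ih =>
    obtain ⟨huv, rfl⟩ := ih
    exfalso
    have h1 : u < v := htopo _ huv
    have hk : myKey (v, w) < myKey (u, v) := myKey_lt_of_fst_lt (p := (u, v)) (q := (v, w)) h1
    have := myT_lt hadj huv hk
    omega

lemma myT_bijOn {E : Finset (V × V)} :
    Set.BijOn (fun p : V × V => myT E p.1 p.2) (↑E : Set (V × V)) (Set.Icc 1 E.card) := by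
  have hmaps : Set.MapsTo (fun p : V × V => myT E p.1 p.2) (↑E) (Set.Icc 1 E.card) := by
    intro p hp
    simp only [Finset.mem_coe] at hp
    have hp' : (p.1, p.2) ∈ E := hp
    have hsub : E.filter (fun q => myKey q < myKey (p.1, p.2)) ⊆ E.erase p := by
      intro q hq
      simp only [Finset.mem_filter] at hq
      refine Finset.mem_erase.2 ⟨?_, hq.1⟩
      rintro rfl
      exact absurd hq.2 (lt_irrefl _)
    have hc := Finset.card_le_card hsub
    rw [Finset.card_erase_of_mem hp] at hc
    have hpos : 0 < E.card := Finset.card_pos.2 ⟨p, hp⟩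
    have hT : myT E p.1 p.2 = 1 + (E.filter fun q => myKey q < myKey (p.1, p.2)).card :=
      if_pos hp'
    simp only [Set.mem_Icc, hT]
    omega
  have hinj : Set.InjOn (fun p : V × V => myT E p.1 p.2) ↑E := by
    intro p hp q hq hpq
    simp only [Finset.mem_coe] at hp hq
    simp only at hpq
    rcases lt_trichotomy (myKey p) (myKey q) with h | h | h
    · exact absurd hpq (myT_lt (a := p.1) (b := p.2) (c := q.1) (d := q.2) hp hq h).ne
    · exact myKey_injective h
    · exact absurd hpq (myT_lt (a := q.1) (b := q.2) (c := p.1) (d := p.2) hq hp h).ne'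
  refine ⟨hmaps, hinj, ?_⟩
  have himg : ((fun p : V × V => myT E p.1 p.2) '' ↑E).ncard = E.card := by
    rw [Set.ncard_image_of_injOn hinj, Set.ncard_coe_finset]
  have hIcc : (Set.Icc 1 E.card).ncard = E.card := by
    rw [← Finset.coe_Icc, Set.ncard_coe_finset, Nat.card_Icc]
    omega
  have heq : (fun p : V × V => myT E p.1 p.2) '' ↑E = Set.Icc 1 E.card := by
    apply Set.eq_of_subset_of_ncard_le hmaps.image_subset _ (Set.finite_Icc _ _)
    rw [himg, hIcc]
  rw [Set.SurjOn, heq]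

lemma reach_eq {E : Finset (V × V)} (htopo : ∀ p ∈ E, p.1 < p.2) (u : V) :
    dreachSet (fun a b => (a, b) ∈ E) (myT E) u
      = ↑(insert u ((E.filter fun p => p.1 = u).image Prod.snd)) := by
  ext x
  simp only [dreachSet, Set.mem_setOf_eq, Finset.coe_insert, Set.mem_insert_iff,
    Finset.mem_coe, Finset.mem_image, Finset.mem_filter]
  constructor
  · rintro (rfl | ⟨τ, h⟩)
    · exact Or.inl rfl
    · obtain ⟨hux, -⟩ := reach_char htopo h
      exact Or.inr ⟨(u, x), ⟨hux, rfl⟩, rfl⟩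
  · rintro (rfl | ⟨p, ⟨hpE, hp1⟩, hp2⟩)
    · exact Or.inl rfl
    · refine Or.inr ⟨_, DTReach.single ?_⟩
      have hpx : p = (u, x) := Prod.ext hp1 hp2
      rwa [hpx] at hpE

lemma card_R {E : Finset (V × V)} (htopo : ∀ p ∈ E, p.1 < p.2) (u : V) :
    (insert u ((E.filter fun p => p.1 = u).image Prod.snd)).card
      = (E.filter fun p => p.1 = u).card + 1 := by
  rw [Finset.card_insert_of_notMem, Finset.card_image_of_injOn]
  · intro p hp q hq hpq
    simp only [Finset.coe_filter, Set.mem_setOf_eq] at hp hq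
    exact Prod.ext (hp.2.trans hq.2.symm) hpq
  · simp only [Finset.mem_image, Finset.mem_filter, not_exists]
    rintro p ⟨⟨hpE, hp1⟩, hp2⟩
    have := htopo p hpE
    rw [hp1, hp2] at this
    exact lt_irrefl _ this

lemma sup_reach_lb {E : Finset (V × V)} (htopo : ∀ p ∈ E, p.1 < p.2) (t : V → V → ℕ) :
    (Finset.univ.sup fun v : V => (E.filter fun p => p.1 = v).card) + 1
      ≤ Finset.univ.sup fun v : V => (dreachSet (fun a b => (a, b) ∈ E) t v).ncard := by
  obtain ⟨v₀, -, hv₀⟩ := Finset.exists_mem_eq_sup Finset.univ Finset.univ_nonempty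
      (fun v : V => (E.filter fun p => p.1 = v).card)
  rw [hv₀]
  refine le_trans ?_ (Finset.le_sup (Finset.mem_univ v₀))
  have hsub : (↑(insert v₀ ((E.filter fun p => p.1 = v₀).image Prod.snd)) : Set V)
      ⊆ dreachSet (fun a b => (a, b) ∈ E) t v₀ := by
    intro x hx
    simp only [Finset.coe_insert, Set.mem_insert_iff, Finset.mem_coe, Finset.mem_image,
      Finset.mem_filter] at hx
    rcases hx with rfl | ⟨p, ⟨hpE, hp1⟩, hp2⟩
    · exact Or.inl rfl
    · refine Or.inr ⟨_, DTReach.single ?_⟩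
      have hpx : p = (v₀, x) := Prod.ext hp1 hp2
      rwa [hpx] at hpE
  calc (E.filter fun p => p.1 = v₀).card + 1
      = (insert v₀ ((E.filter fun p => p.1 = v₀).image Prod.snd)).card :=
        (card_R htopo v₀).symm
    _ = (↑(insert v₀ ((E.filter fun p => p.1 = v₀).image Prod.snd)) : Set V).ncard :=
        (Set.ncard_coe_finset _).symm
    _ ≤ _ := Set.ncard_le_ncard hsub (Set.toFinite _)

end Aux

/-- For a DAG (edges `E`, topologically ordered by `<`), the minimum, over all bijective
time assignments of `{1,…,|E|}` to the edges, of the maximum temporal reachability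
equals the maximum out-degree plus one. -/
theorem stmt_5 {V : Type*} [Fintype V] [Nonempty V] [LinearOrder V]
    [DecidableEq V] (E : Finset (V × V))
    (htopo : ∀ p ∈ E, p.1 < p.2) :
    IsLeast {k : ℕ | ∃ t : V → V → ℕ,
        Set.BijOn (fun p : V × V => t p.1 p.2) (↑E : Set (V × V)) (Set.Icc 1 E.card) ∧
        k = Finset.univ.sup fun v : V =>
          (dreachSet (fun a b => (a, b) ∈ E) t v).ncard}
      ((Finset.univ.sup fun v : V => (E.filter fun p => p.1 = v).card) + 1) := by
  constructor
  · refine ⟨myT E, myT_bijOn, ?_⟩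
    apply le_antisymm (sup_reach_lb htopo (myT E))
    apply Finset.sup_le
    intro v _
    rw [reach_eq htopo v, Set.ncard_coe_finset, card_R htopo v]
    exact Nat.add_le_add_right
      (Finset.le_sup (f := fun v : V => (E.filter fun p => p.1 = v).card) (Finset.mem_univ v)) 1
  · rintro k ⟨t, -, rfl⟩
    exact sup_reach_lb htopo t
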